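/- There is a short exact sequence of R-bimodules 0 → R → B_s → R_s → 0, where R → B_s sends 1 ↦ Δ_s, and B_s → R_s sends f ⊗ g ↦ f·s(g). -/

import Mathlib

set_option synthInstance.maxHeartbeats 1000000
set_option maxHeartbeats 1000000


open MvPolynomial

/-- The linear polynomial in `R = Sym(𝔥*)` corresponding to the element of `𝔥*`
with coordinates `φ` (identifying `𝔥` with `Fin n → k` so that `𝔥*` has dual basis
corresponding to the variables `X i`). -/
noncomputable def lin {k : Type*} [CommRing k] {n : ℕ} (φ : Fin n → k) :
    MvPolynomial (Fin n) k :=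
  ∑ i, C (φ i) * X i

/-- The reflection `s` acting on `R = Sym(𝔥*)`, induced by
`s(γ) = γ - ⟨α^∨, γ⟩·α` on `𝔥*`, where `α^∨ ∈ 𝔥` has coordinates `αv` and
`α ∈ 𝔥*` has coordinates `α`. -/
noncomputable def sRefl {k : Type*} [CommRing k] {n : ℕ} (αv α : Fin n → k) :
    MvPolynomial (Fin n) k →ₐ[k] MvPolynomial (Fin n) k :=
  aeval (fun i => X i - C (αv i) * lin α)

/-- The subalgebra `R^s` of `s`-invariants. -/
noncomputable def invSub {k : Type*} [CommRing k] {n : ℕ} (αv α : Fin n → k) :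
    Subalgebra k (MvPolynomial (Fin n) k) :=
  AlgHom.equalizer (sRefl αv α) (AlgHom.id k (MvPolynomial (Fin n) k))

open scoped TensorProduct

section Aux
variable {k : Type*} [CommRing k] {n : ℕ} (αv α : Fin n → k)

lemma sRefl_lin (φ : Fin n → k) :
    sRefl αv α (lin φ) = lin φ - C (∑ i, αv i * φ i) * lin α := by
  have h : ∀ i : Fin n, C (φ i) * (X i - C (αv i) * lin α)
      = C (φ i) * X i - C (αv i * φ i) * (lin α : MvPolynomial (Fin n) k) := by
    intro i; rw [map_mul]; ring
  calc sRefl αv α (lin φ)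
      = ∑ i, C (φ i) * (X i - C (αv i) * lin α) := by
        simp only [sRefl, lin, map_sum, map_mul, aeval_C, aeval_X, algebraMap_eq]
    _ = ∑ i, (C (φ i) * X i - C (αv i * φ i) * lin α) := by simp only [h]
    _ = lin φ - C (∑ i, αv i * φ i) * lin α := by
        rw [Finset.sum_sub_distrib, ← Finset.sum_mul, ← map_sum]; rfl

lemma aeval_lin (v φ : Fin n → k) : aeval v (lin φ) = ∑ i, φ i * v i := by
  simp [lin]

lemma sub_sRefl_mem (f : MvPolynomial (Fin n) k) :
    ∃ q : MvPolynomial (Fin n) k, f - sRefl αv α f = q * lin α := by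
  set I : Ideal (MvPolynomial (Fin n) k) := Ideal.span {lin α} with hI
  have key : (Ideal.Quotient.mkₐ k I).comp (sRefl αv α) = Ideal.Quotient.mkₐ k I := by
    apply MvPolynomial.algHom_ext
    intro i
    simp only [AlgHom.comp_apply, sRefl, aeval_X, Ideal.Quotient.mkₐ_eq_mk, map_sub]
    have : (C (αv i) * lin α : MvPolynomial (Fin n) k) ∈ I := by
      exact Ideal.mul_mem_left _ _ (Ideal.subset_span rfl)
    rw [Ideal.Quotient.eq_zero_iff_mem.2 this, sub_zero]
  have h2 : Ideal.Quotient.mk I (sRefl αv α f) = Ideal.Quotient.mk I f := by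
    have := congrArg (fun g => g f) key
    simpa using this
  have h3 : f - sRefl αv α f ∈ I := by
    rw [Ideal.Quotient.eq] at h2
    simpa using (I.neg_mem h2)
  rw [hI, Ideal.mem_span_singleton] at h3
  obtain ⟨q, hq⟩ := h3
  exact ⟨q, by rw [hq, mul_comm]⟩

lemma linα_ne (hDS2 : ∃ v : Fin n → k, ∑ i, α i * v i = 1) [Nontrivial k] :
    (lin α : MvPolynomial (Fin n) k) ≠ 0 := by
  obtain ⟨v, hv⟩ := hDS2
  intro h
  have := aeval_lin v α
  rw [h, hv, map_zero] at this
  exact one_ne_zero this.symm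

lemma sRefl_linα (hpair : ∑ i, αv i * α i = 2) :
    sRefl αv α (lin α) = - lin α := by
  rw [sRefl_lin, hpair]
  rw [show ((2:k) = 1 + 1) by norm_num, map_add, map_one]
  ring

lemma sRefl_invol (hpair : ∑ i, αv i * α i = 2) (f : MvPolynomial (Fin n) k) :
    sRefl αv α (sRefl αv α f) = f := by
  have key : (sRefl αv α).comp (sRefl αv α) = AlgHom.id k (MvPolynomial (Fin n) k) := by
    apply MvPolynomial.algHom_ext
    intro i
    simp only [AlgHom.comp_apply, AlgHom.id_apply]
    rw [show sRefl αv α (X i) = X i - C (αv i) * lin α from aeval_X _ i]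
    rw [map_sub, map_mul, sRefl_linα αv α hpair,
      show sRefl αv α (X i) = X i - C (αv i) * lin α from aeval_X _ i,
      show (sRefl αv α) (C (αv i)) = C (αv i) by
        simpa [algebraMap_eq] using (sRefl αv α).commutes (αv i)]
    ring
  exact congrArg (fun g => g f) key

lemma sRefl_linδ (δ : Fin n → k) (hδ : ∑ i, αv i * δ i = 1) :
    sRefl αv α (lin δ) = lin δ - lin α := by
  rw [sRefl_lin, hδ, map_one, one_mul]

lemma decomp [IsDomain k] (hpair : ∑ i, αv i * α i = 2)
    (hDS2 : ∃ v : Fin n → k, ∑ i, α i * v i = 1)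
    (δ : Fin n → k) (hδ : ∑ i, αv i * δ i = 1) (f : MvPolynomial (Fin n) k) :
    ∃ c d : MvPolynomial (Fin n) k, sRefl αv α c = c ∧ sRefl αv α d = d ∧
      f = c + d * sRefl αv α (lin δ) := by
  obtain ⟨q, hq⟩ := sub_sRefl_mem αv α f
  have hαne := linα_ne α hDS2
  have hsf : sRefl αv α f = f - q * lin α := by rw [← hq]; ring
  have hsq : sRefl αv α q = q := by
    have h1 : sRefl αv α f - f = sRefl αv α q * (- lin α) := by
      have := congrArg (sRefl αv α) hq
      rw [map_sub, map_mul, sRefl_invol αv α hpair, sRefl_linα αv α hpair] at this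
      linear_combination this
    have h2 : (sRefl αv α q - q) * lin α = 0 := by linear_combination h1 + hq
    rcases mul_eq_zero.1 h2 with h | h
    · exact sub_eq_zero.1 h
    · exact absurd h hαne
  refine ⟨f - (-q) * sRefl αv α (lin δ), -q, ?_, by rw [map_neg, hsq], by ring⟩
  rw [map_sub, map_mul, map_neg, hsq, sRefl_invol αv α hpair, hsf,
    sRefl_linδ αv α δ hδ]
  ring

open scoped TensorProduct

lemma mem_invSub {c : MvPolynomial (Fin n) k} :
    c ∈ invSub αv α ↔ sRefl αv α c = c := Iff.rfl

/-- `sRefl` as an `R^s`-algebra hom. -/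
noncomputable def sReflA (αv α : Fin n → k) :
    MvPolynomial (Fin n) k →ₐ[↥(invSub αv α)] MvPolynomial (Fin n) k :=
  { toRingHom := (sRefl αv α).toRingHom
    commutes' := fun c => c.2 }

lemma sReflA_apply (f : MvPolynomial (Fin n) k) : sReflA αv α f = sRefl αv α f := rfl

noncomputable def pmap (αv α : Fin n → k) :
    (MvPolynomial (Fin n) k ⊗[↥(invSub αv α)] MvPolynomial (Fin n) k)
      →ₐ[↥(invSub αv α)] MvPolynomial (Fin n) k :=
  Algebra.TensorProduct.productMap (AlgHom.id _ _) (sReflA αv α)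

noncomputable def qmap (αv α : Fin n → k) :
    (MvPolynomial (Fin n) k ⊗[↥(invSub αv α)] MvPolynomial (Fin n) k)
      →ₐ[↥(invSub αv α)] MvPolynomial (Fin n) k :=
  Algebra.TensorProduct.productMap (AlgHom.id _ _) (AlgHom.id _ _)

lemma pmap_tmul (f g : MvPolynomial (Fin n) k) :
    pmap αv α (f ⊗ₜ[↥(invSub αv α)] g) = f * sRefl αv α g := by
  simp [pmap, Algebra.TensorProduct.productMap_apply_tmul, sReflA_apply]
  rfl

lemma qmap_tmul (f g : MvPolynomial (Fin n) k) :
    qmap αv α (f ⊗ₜ[↥(invSub αv α)] g) = f * g := by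
  simp [qmap, Algebra.TensorProduct.productMap_apply_tmul]
  rfl

lemma tmul_inv_left (f c g : MvPolynomial (Fin n) k) (hc : c ∈ invSub αv α) :
    f ⊗ₜ[↥(invSub αv α)] (c * g) = (c * f) ⊗ₜ[↥(invSub αv α)] g := by
  have h := TensorProduct.smul_tmul (R := ↥(invSub αv α)) (R' := ↥(invSub αv α))
      (M := MvPolynomial (Fin n) k) (N := MvPolynomial (Fin n) k)
      (⟨c, hc⟩ : ↥(invSub αv α)) f g
  have e1 : (⟨c, hc⟩ : ↥(invSub αv α)) • f = c * f := by
    rw [Algebra.smul_def]; rfl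
  have e2 : (⟨c, hc⟩ : ↥(invSub αv α)) • g = c * g := by
    rw [Algebra.smul_def]; rfl
  rw [e1, e2] at h
  exact h.symm

lemma repr_tensor [IsDomain k] (hpair : ∑ i, αv i * α i = 2)
    (hDS2 : ∃ v : Fin n → k, ∑ i, α i * v i = 1)
    (δ : Fin n → k) (hδ : ∑ i, αv i * δ i = 1)
    (x : MvPolynomial (Fin n) k ⊗[↥(invSub αv α)] MvPolynomial (Fin n) k) :
    ∃ a b : MvPolynomial (Fin n) k,
      x = a ⊗ₜ[↥(invSub αv α)] 1 + b ⊗ₜ[↥(invSub αv α)] (sRefl αv α (lin δ)) := by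
  induction x using TensorProduct.induction_on with
  | zero => exact ⟨0, 0, by simp⟩
  | tmul f g =>
      obtain ⟨c, d, hc, hd, hg⟩ := decomp αv α hpair hDS2 δ hδ g
      refine ⟨c * f, d * f, ?_⟩
      rw [hg, TensorProduct.tmul_add, ← tmul_inv_left αv α f c 1 hc,
        ← tmul_inv_left αv α f d (sRefl αv α (lin δ)) hd, mul_one]
  | add x y hx hy =>
      obtain ⟨a, b, hab⟩ := hx
      obtain ⟨a', b', hab'⟩ := hy
      refine ⟨a + a', b + b', ?_⟩
      rw [hab, hab', TensorProduct.add_tmul, TensorProduct.add_tmul]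
      abel


end Aux

/-- There is a short exact sequence of `R`-bimodules
`0 → R → B_s → R_s → 0`, where `R → B_s` sends `1 ↦ Δ_s = δ⊗1 − 1⊗s(δ)` and
`B_s → R_s` sends `f ⊗ g ↦ f·s(g)`.  That is: the map `p : B_s → R_s` with
`p(f ⊗ g) = f·s(g)` is a well-defined (twisted-right-linear) surjection, the map
`R → B_s`, `f ↦ f·Δ_s` is injective, and the kernel of `p` is exactly `R·Δ_s`. -/
theorem ses_R_Bs_Rs {k : Type*} [CommRing k] [IsDomain k] {n : ℕ}
    (αv α : Fin n → k) (hpair : ∑ i, αv i * α i = 2)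
    (δ : Fin n → k) (hδ : ∑ i, αv i * δ i = 1)
    (hDS2 : ∃ v : Fin n → k, ∑ i, α i * v i = 1) :
    ∃ p : (MvPolynomial (Fin n) k ⊗[↥(invSub αv α)] MvPolynomial (Fin n) k) →ₗ[k]
        MvPolynomial (Fin n) k,
      (∀ f g : MvPolynomial (Fin n) k,
        p (f ⊗ₜ[↥(invSub αv α)] g) = f * sRefl αv α g) ∧
      Function.Surjective p ∧
      (∀ (x : MvPolynomial (Fin n) k ⊗[↥(invSub αv α)] MvPolynomial (Fin n) k)
          (g : MvPolynomial (Fin n) k),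
        p (x * ((1 : MvPolynomial (Fin n) k) ⊗ₜ[↥(invSub αv α)] g)) = p x * sRefl αv α g) ∧
      Function.Injective (fun f : MvPolynomial (Fin n) k =>
        (f ⊗ₜ[↥(invSub αv α)] (1 : MvPolynomial (Fin n) k)) *
          (lin δ ⊗ₜ[↥(invSub αv α)] (1 : MvPolynomial (Fin n) k)
            - (1 : MvPolynomial (Fin n) k) ⊗ₜ[↥(invSub αv α)] sRefl αv α (lin δ))) ∧
      (∀ x : MvPolynomial (Fin n) k ⊗[↥(invSub αv α)] MvPolynomial (Fin n) k,
        p x = 0 ↔ ∃ f : MvPolynomial (Fin n) k,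
          x = (f ⊗ₜ[↥(invSub αv α)] (1 : MvPolynomial (Fin n) k)) *
            (lin δ ⊗ₜ[↥(invSub αv α)] (1 : MvPolynomial (Fin n) k)
              - (1 : MvPolynomial (Fin n) k) ⊗ₜ[↥(invSub αv α)] sRefl αv α (lin δ))) := by
  have hαne := linα_ne α hDS2
  have hssδ : sRefl αv α (sRefl αv α (lin δ)) = lin δ := sRefl_invol αv α hpair _
  refine ⟨LinearMap.restrictScalars k (pmap αv α).toLinearMap,
    fun f g => pmap_tmul αv α f g, ?_, ?_, ?_, ?_⟩
  · intro f
    exact ⟨f ⊗ₜ[↥(invSub αv α)] 1, by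
      show pmap αv α _ = f
      rw [pmap_tmul, map_one, mul_one]⟩
  · intro x g
    show pmap αv α (x * _) = pmap αv α x * _
    rw [map_mul, pmap_tmul, one_mul]
  · intro f g h
    have hq := congrArg (qmap αv α) h
    simp only [map_mul, map_sub, qmap_tmul, one_mul, mul_one] at hq
    have hf : f * lin α = g * lin α := by
      have e : ∀ t : MvPolynomial (Fin n) k,
          t * (lin δ - sRefl αv α (lin δ)) = t * lin α := by
        intro t; rw [sRefl_linδ αv α δ hδ]; ring
      calc f * lin α = f * (lin δ - sRefl αv α (lin δ)) := (e f).symm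
        _ = g * (lin δ - sRefl αv α (lin δ)) := by linear_combination hq
        _ = g * lin α := e g
    exact mul_right_cancel₀ hαne hf
  · intro x
    constructor
    · intro hx
      replace hx : pmap αv α x = 0 := hx
      obtain ⟨a, b, hab⟩ := repr_tensor αv α hpair hDS2 δ hδ x
      rw [hab, map_add, pmap_tmul, pmap_tmul, map_one, mul_one, hssδ] at hx
      refine ⟨-b, ?_⟩
      have key : ∀ c : MvPolynomial (Fin n) k,
          c ⊗ₜ[↥(invSub αv α)] (1 : MvPolynomial (Fin n) k) *
            (lin δ ⊗ₜ[↥(invSub αv α)] (1 : MvPolynomial (Fin n) k)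
              - (1 : MvPolynomial (Fin n) k) ⊗ₜ[↥(invSub αv α)] sRefl αv α (lin δ))
          = (c * lin δ) ⊗ₜ[↥(invSub αv α)] (1 : MvPolynomial (Fin n) k)
              - c ⊗ₜ[↥(invSub αv α)] sRefl αv α (lin δ) := by
        intro c
        have h1 : c ⊗ₜ[↥(invSub αv α)] (1 : MvPolynomial (Fin n) k) *
            (lin δ ⊗ₜ[↥(invSub αv α)] (1 : MvPolynomial (Fin n) k))
            = (c * lin δ) ⊗ₜ[↥(invSub αv α)] (1 : MvPolynomial (Fin n) k) := by
          rw [Algebra.TensorProduct.tmul_mul_tmul, mul_one]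
        have h2 : c ⊗ₜ[↥(invSub αv α)] (1 : MvPolynomial (Fin n) k) *
            ((1 : MvPolynomial (Fin n) k) ⊗ₜ[↥(invSub αv α)] sRefl αv α (lin δ))
            = c ⊗ₜ[↥(invSub αv α)] sRefl αv α (lin δ) := by
          rw [Algebra.TensorProduct.tmul_mul_tmul, mul_one, one_mul]
        calc c ⊗ₜ[↥(invSub αv α)] (1 : MvPolynomial (Fin n) k) *
            (lin δ ⊗ₜ[↥(invSub αv α)] (1 : MvPolynomial (Fin n) k)
              - (1 : MvPolynomial (Fin n) k) ⊗ₜ[↥(invSub αv α)] sRefl αv α (lin δ))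
            = c ⊗ₜ[↥(invSub αv α)] (1 : MvPolynomial (Fin n) k) *
                (lin δ ⊗ₜ[↥(invSub αv α)] (1 : MvPolynomial (Fin n) k))
              - c ⊗ₜ[↥(invSub αv α)] (1 : MvPolynomial (Fin n) k) *
                ((1 : MvPolynomial (Fin n) k) ⊗ₜ[↥(invSub αv α)] sRefl αv α (lin δ)) := by
              ring
          _ = _ := by rw [h1, h2]
      rw [hab, key (-b), show (-b : MvPolynomial (Fin n) k) * lin δ = -(b * lin δ) by ring,
        show a = -(b * lin δ) by linear_combination hx,
        TensorProduct.neg_tmul, TensorProduct.neg_tmul, sub_neg_eq_add]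
    · rintro ⟨f, rfl⟩
      show pmap αv α _ = 0
      rw [map_mul, map_sub, pmap_tmul, pmap_tmul, pmap_tmul, map_one, hssδ]
      ring
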